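/- Every connected loop-chordal graph G is dismantlable: there is a sequence of folds reducing G to a single looped vertex. -/

import Mathlib

/-- A graph, possibly with loops: a symmetric relation on vertices. -/
structure LGraph (V : Type*) where
  Adj : V → V → Prop
  symm : ∀ {u v : V}, Adj u v → Adj v u

namespace LGraph

variable {VG VH : Type*}

/-- `G.ReachIn n x y`: there is a walk of length exactly `n` from `x` to `y`. -/
def ReachIn (G : LGraph VG) : ℕ → VG → VG → Prop
  | 0, x, y => x = y
  | n + 1, x, y => ∃ z, G.Adj x z ∧ G.ReachIn n z y

/-- `dist(A, B) ≥ g`: no walk of length `< g` connects a point of `A` to a point of `B`. -/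
def DistGe (G : LGraph VG) (A B : Set VG) (g : ℕ) : Prop :=
  ∀ x ∈ A, ∀ y ∈ B, ∀ n < g, ¬ G.ReachIn n x y

/-- A graph homomorphism from `G` to `H`. -/
def IsHom (G : LGraph VG) (H : LGraph VH) (f : VG → VH) : Prop :=
  ∀ ⦃x y : VG⦄, G.Adj x y → H.Adj (f x) (f y)

/-- `f` is a graph homomorphism on the subgraph of `G` induced by `S` (local admissibility). -/
def IsHomOn (G : LGraph VG) (H : LGraph VH) (f : VG → VH) (S : Set VG) : Prop :=
  ∀ ⦃x⦄, x ∈ S → ∀ ⦃y⦄, y ∈ S → G.Adj x y → H.Adj (f x) (f y)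

/-- The configuration `α|_A` is globally admissible: it extends to a point of `Hom(G,H)`. -/
def GlobAdm (G : LGraph VG) (H : LGraph VH) (A : Set VG) (α : VG → VH) : Prop :=
  ∃ ω : VG → VH, G.IsHom H ω ∧ ∀ x ∈ A, ω x = α x

/-- A board: countable, simple, connected, locally finite, with at least two vertices. -/
structure IsBoard (G : LGraph VG) : Prop where
  countable : Countable VG
  simple : ∀ v : VG, ¬ G.Adj v v
  connected : ∀ x y : VG, ∃ n : ℕ, G.ReachIn n x y
  locallyFinite : ∀ v : VG, {w : VG | G.Adj v w}.Finite
  nontrivial : Nontrivial VG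

/-- Single-site fillability of `Hom(G, H)`. -/
def SSF (G : LGraph VG) (H : LGraph VH) : Prop :=
  ∀ (x : VG) (B : Set VG), B ⊆ {y : VG | G.Adj x y} →
    ∀ β : VG → VH, G.IsHomOn H β B →
      ∃ α : VG → VH, G.IsHomOn H α (insert x B) ∧ ∀ y ∈ B, α y = β y

/-- Topological strong spatial mixing with gap `g`. -/
def TSSM (G : LGraph VG) (H : LGraph VH) (g : ℕ) : Prop :=
  ∀ (A B S : Set VG), A.Finite → B.Finite → S.Finite → G.DistGe A B g →
    ∀ α σ β : VG → VH,
      (∃ ω, G.IsHom H ω ∧ (∀ x ∈ A, ω x = α x) ∧ (∀ x ∈ S, ω x = σ x)) →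
      (∃ ω, G.IsHom H ω ∧ (∀ x ∈ S, ω x = σ x) ∧ (∀ x ∈ B, ω x = β x)) →
      ∃ ω, G.IsHom H ω ∧ (∀ x ∈ A, ω x = α x) ∧ (∀ x ∈ S, ω x = σ x) ∧
        ∀ x ∈ B, ω x = β x

/-- Strong irreducibility with gap `g`. -/
def StrongIrred (G : LGraph VG) (H : LGraph VH) (g : ℕ) : Prop :=
  ∀ (A B : Set VG), A.Finite → B.Finite → A.Nonempty → B.Nonempty → Disjoint A B →
    G.DistGe A B g → ∀ α β : VG → VH,
      G.GlobAdm H A α → G.GlobAdm H B β →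
      ∃ ω, G.IsHom H ω ∧ (∀ x ∈ A, ω x = α x) ∧ ∀ x ∈ B, ω x = β x

end LGraph

/-- A simple graph is chordal if every cycle of length at least 4 has a chord. -/
def SimpleGraph.IsChordal {V : Type*} (G : SimpleGraph V) : Prop :=
  ∀ (v : V) (c : G.Walk v v), c.IsCycle → 4 ≤ c.length →
    ∃ u w : V, u ∈ c.support ∧ w ∈ c.support ∧ G.Adj u w ∧ s(u, w) ∉ c.edges

namespace LGraph

/-- The simple graph obtained from `G` by deleting all loops. -/
def loopless {V : Type*} (G : LGraph V) : SimpleGraph V where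
  Adj u v := u ≠ v ∧ G.Adj u v
  symm := ⟨fun u v h => ⟨Ne.symm h.1, G.symm h.2⟩⟩
  loopless := ⟨fun v h => h.1 rfl⟩

/-- The subgraph of `G` induced by a set `S` of vertices. -/
def induce {V : Type*} (G : LGraph V) (S : Set V) : LGraph S :=
  ⟨fun a b => G.Adj a.1 b.1, fun {_ _} h => G.symm h⟩

/-- A graph is loop-chordal if every vertex has a loop and its loopless version is chordal. -/
def LoopChordal {V : Type*} (G : LGraph V) : Prop :=
  (∀ v, G.Adj v v) ∧ G.loopless.IsChordal

end LGraph

namespace LGraph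

/-- The subgraph of `G` induced on `S` can be reduced by folds to a single looped vertex. -/
inductive DismOnLooped {V : Type*} [DecidableEq V] (G : LGraph V) : Finset V → Prop
  | single (v : V) (hv : G.Adj v v) : DismOnLooped G {v}
  | fold (S : Finset V) (u v : V) (hu : u ∈ S) (hv : v ∈ S) (huv : u ≠ v)
      (habsorb : ∀ w ∈ S, G.Adj u w → G.Adj v w) (hrec : DismOnLooped G (S.erase u)) :
      DismOnLooped G S

end LGraph


namespace LCD

open SimpleGraph Walk

variable {V : Type*} {H : SimpleGraph V}


open SimpleGraph Walk

variable {V : Type*} {H : SimpleGraph V}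

/-- Prefix of a walk up to the `n`-th vertex. -/
def takeW : ∀ {x y : V} (p : H.Walk x y) (n : ℕ), H.Walk x (p.getVert n)
  | _, _, .nil, _ => .nil
  | _, _, .cons _ _, 0 => .nil
  | _, _, .cons h q, n + 1 => .cons h (takeW q n)

/-- Suffix of a walk from the `n`-th vertex. -/
def dropW : ∀ {x y : V} (p : H.Walk x y) (n : ℕ), H.Walk (p.getVert n) y
  | _, _, .nil, _ => .nil
  | _, _, .cons h q, 0 => .cons h q
  | _, _, .cons _ q, n + 1 => dropW q n

lemma length_takeW : ∀ {x y : V} (p : H.Walk x y) (n : ℕ), (takeW p n).length = min n p.length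
  | _, _, .nil, n => by simp [takeW]
  | _, _, .cons _ _, 0 => by simp [takeW]; rfl
  | _, _, .cons h q, n + 1 => by
      simp [takeW, length_takeW q n, Walk.length_cons]

lemma length_dropW : ∀ {x y : V} (p : H.Walk x y) (n : ℕ), (dropW p n).length = p.length - n
  | _, _, .nil, n => by simp [dropW]
  | _, _, .cons _ _, 0 => by simp [dropW]; rfl
  | _, _, .cons h q, n + 1 => by
      simp [dropW, length_dropW q n, Walk.length_cons]

lemma support_takeW : ∀ {x y : V} (p : H.Walk x y) (n : ℕ) {v : V},
    v ∈ (takeW p n).support → v ∈ p.support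
  | _, _, .nil, n, v => by intro h; exact h
  | _, _, .cons _ _, 0, v => by
      simp only [takeW, Walk.support_nil, List.mem_singleton, Walk.support_cons, List.mem_cons]
      exact fun h => .inl (List.mem_singleton.mp h)
  | _, _, .cons h q, n + 1, v => by
      intro hv
      have hv' : v ∈ (Walk.cons h (takeW q n)).support := hv
      rw [Walk.support_cons, List.mem_cons] at hv'
      rw [Walk.support_cons, List.mem_cons]
      rcases hv' with rfl | hv'
      · exact .inl rfl
      · exact .inr (support_takeW q n hv')

lemma support_dropW : ∀ {x y : V} (p : H.Walk x y) (n : ℕ) {v : V},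
    v ∈ (dropW p n).support → v ∈ p.support
  | _, _, .nil, n, v => by intro h; exact h
  | _, _, .cons _ _, 0, v => by intro h; exact h
  | _, _, .cons h q, n + 1, v => by
      intro hv
      simp only [Walk.support_cons, List.mem_cons]
      exact .inr (support_dropW q n hv)

lemma mem_edges_getVert : ∀ {x y : V} (p : H.Walk x y) {i : ℕ}, i < p.length →
    s(p.getVert i, p.getVert (i + 1)) ∈ p.edges
  | _, _, .nil, i, hi => by simp at hi
  | _, _, .cons h q, 0, hi => by
      simp [Walk.getVert, Walk.edges_cons]
  | _, _, .cons h q, i + 1, hi => by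
      simp only [Walk.length_cons, Nat.add_lt_add_iff_right] at hi
      simp only [Walk.getVert, Walk.edges_cons, List.mem_cons]
      exact .inr (mem_edges_getVert q hi)

lemma no_chord {P : V → Prop} {x y : V} (p : H.Walk x y)
    (hadm : ∀ v ∈ p.support, P v)
    (hmin : ∀ q : H.Walk x y, (∀ v ∈ q.support, P v) → p.length ≤ q.length)
    {u w : V} (hu : u ∈ p.support) (hw : w ∈ p.support) (ha : H.Adj u w)
    (he : s(u, w) ∉ p.edges) : False := by
  have aux : ∀ i j : ℕ, i < j → j ≤ p.length →
      H.Adj (p.getVert i) (p.getVert j) → s(p.getVert i, p.getVert j) ∉ p.edges → False := by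
    intro i j hij hjl hadj hedge
    by_cases hji : j = i + 1
    · subst hji; exact hedge (mem_edges_getVert p (by omega))
    · set q := (takeW p i).append (Walk.cons hadj (dropW p j)) with hq
      have hlen : q.length = min i p.length + (p.length - j + 1) := by
        simp [hq, Walk.length_append, Walk.length_cons, length_takeW, length_dropW]
      have hle : p.length ≤ q.length := by
        refine hmin q ?_
        intro v hv
        rw [hq, Walk.mem_support_append_iff] at hv
        rcases hv with hv | hv
        · exact hadm v (support_takeW p i hv)
        · simp only [Walk.support_cons, List.mem_cons] at hv
          rcases hv with rfl | hv
          · exact hadm _ (support_takeW p i (Walk.end_mem_support _))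
          · exact hadm v (support_dropW p j hv)
      omega
  obtain ⟨i, hiu, hil⟩ := Walk.mem_support_iff_exists_getVert.mp hu
  obtain ⟨j, hjw, hjl⟩ := Walk.mem_support_iff_exists_getVert.mp hw
  rcases lt_trichotomy i j with hij | hij | hij
  · exact aux i j hij hjl (by rw [hiu, hjw]; exact ha) (by rw [hiu, hjw]; exact he)
  · exact ha.ne (by rw [← hiu, ← hjw, hij])
  · exact aux j i hij hil (by rw [hiu, hjw]; exact ha.symm)
      (by rw [hiu, hjw, Sym2.eq_swap]; exact he)

lemma exists_min_path (P : V → Prop) {x y : V}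
    (hne : ∃ p : H.Walk x y, ∀ v ∈ p.support, P v) :
    ∃ p : H.Walk x y, (∀ v ∈ p.support, P v) ∧ p.IsPath ∧
      ∀ q : H.Walk x y, (∀ v ∈ q.support, P v) → p.length ≤ q.length := by
  classical
  have hex : ∃ n, ∃ p : H.Walk x y, (∀ v ∈ p.support, P v) ∧ p.length = n := by
    obtain ⟨p, hp⟩ := hne; exact ⟨p.length, p, hp, rfl⟩
  obtain ⟨p0, h0, hlen0⟩ := Nat.find_spec hex
  refine ⟨p0.bypass, fun v hv => h0 v (p0.support_bypass_subset hv), p0.bypass_isPath, ?_⟩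
  intro q hq
  calc p0.bypass.length ≤ p0.length := p0.length_bypass_le
    _ = Nat.find hex := hlen0
    _ ≤ q.length := Nat.find_le ⟨q, hq, rfl⟩

/-- Every vertex on a walk whose support satisfies `D` is `Q`, given closure of `Q`
along edges into `D` and `Q` at the start. -/
lemma walk_all {Q D : V → Prop} (hclose : ∀ u v, Q u → H.Adj u v → D v → Q v) :
    ∀ {c z : V} (p : H.Walk c z), (∀ v ∈ p.support, D v) → Q c → ∀ v ∈ p.support, Q v
  | _, _, .nil => by
      intro hadm hc v hv
      rw [Walk.mem_support_nil_iff] at hv; subst hv; exact hc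
  | c, z, .cons h q => by
      intro hadm hc v hv
      have hq2 : Q _ := hclose _ _ hc h (hadm _ (by simp [Walk.support_cons]))
      rw [Walk.support_cons, List.mem_cons] at hv
      rcases hv with rfl | hv
      · exact hc
      · exact walk_all hclose q (fun u hu => hadm u (by simp [Walk.support_cons, hu])) hq2 v hv

/-- First-hit lemma: a walk from a `Q ∧ D` vertex whose support is `= x` or `D`,
containing `x`, yields a `Q` neighbor of `x`. -/
lemma first_hit {Q D : V → Prop} {x : V} (hclose : ∀ u v, Q u → H.Adj u v → D v → Q v)
    (hxD : ¬ D x) :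
    ∀ {c z : V} (p : H.Walk c z), (∀ v ∈ p.support, v = x ∨ D v) → Q c → D c →
      x ∈ p.support → ∃ v, Q v ∧ H.Adj x v
  | _, _, .nil => by
      intro hadm hc hcD hx
      rw [Walk.mem_support_nil_iff] at hx; subst hx; exact absurd hcD hxD
  | c, z, @Walk.cons _ _ _ t _ h q => by
      intro hadm hc hcD hx
      by_cases ht : t = x
      · subst ht; exact ⟨c, hc, h.symm⟩
      · have htD : D t := by
          rcases hadm t (by simp [Walk.support_cons]) with rfl | hD
          · exact absurd rfl ht
          · exact hD
        have hx' : x ∈ q.support := by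
          rw [Walk.support_cons, List.mem_cons] at hx
          rcases hx with rfl | hx
          · exact absurd hcD hxD
          · exact hx
        exact first_hit hclose hxD q (fun u hu => hadm u (by simp [Walk.support_cons, hu]))
          (hclose _ _ hc h htD) htD hx'

lemma clique_sep (hch : H.IsChordal) {x y : V} (hxy : x ≠ y) (hnadj : ¬H.Adj x y)
    {PA PB : V → Prop} (hAB : ∀ v, PA v → PB v → False)
    (hxA : ¬PA x) (hyA : ¬PA y) (hxB : ¬PB x) (hyB : ¬PB y)
    (hcross : ∀ u v, PA u → PB v → ¬H.Adj u v)
    (hA : ∃ p : H.Walk x y, ∀ v ∈ p.support, v = x ∨ v = y ∨ PA v)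
    (hB : ∃ p : H.Walk x y, ∀ v ∈ p.support, v = x ∨ v = y ∨ PB v) : False := by
  obtain ⟨pA, admA, pathA, minA⟩ := exists_min_path _ hA
  obtain ⟨pB, admB, pathB, minB⟩ := exists_min_path _ hB
  cases pA with
  | nil => exact hxy rfl
  | cons h1 tA =>
  rename_i a1
  cases pB with
  | nil => exact hxy rfl
  | cons h2 tB =>
  rename_i b1
  -- basic facts
  have hxtA : x ∉ tA.support := ((Walk.cons_isPath_iff h1 tA).mp pathA).2
  have htApath : tA.IsPath := ((Walk.cons_isPath_iff h1 tA).mp pathA).1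
  have hxtB : x ∉ tB.support := ((Walk.cons_isPath_iff h2 tB).mp pathB).2
  have htBpath : tB.IsPath := ((Walk.cons_isPath_iff h2 tB).mp pathB).1
  have hPa1 : PA a1 := by
    rcases admA a1 (by simp [Walk.support_cons, Walk.start_mem_support]) with rfl | rfl | h
    · exact absurd rfl h1.ne
    · exact absurd h1 hnadj
    · exact h
  have hPb1 : PB b1 := by
    rcases admB b1 (by simp [Walk.support_cons, Walk.start_mem_support]) with rfl | rfl | h
    · exact absurd rfl h2.ne
    · exact absurd h2 hnadj
    · exact h
  have ha1y : a1 ≠ y := fun h => hyA (h ▸ hPa1)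
  have hb1y : b1 ≠ y := fun h => hyB (h ▸ hPb1)
  have htAlen : 1 ≤ tA.length := by
    rcases Nat.eq_zero_or_pos tA.length with h0 | h; swap
    · exact h
    · exact absurd (Walk.eq_of_length_eq_zero h0 ▸ rfl : a1 = y) ha1y
  have htBlen : 1 ≤ tB.length := by
    rcases Nat.eq_zero_or_pos tB.length with h0 | h; swap
    · exact h
    · exact absurd (Walk.eq_of_length_eq_zero h0 ▸ rfl : b1 = y) hb1y
  -- the cycle
  set r : H.Walk a1 x := tA.append (Walk.cons h2 tB).reverse with hr
  set c : H.Walk x x := Walk.cons h1 r with hc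
  have hLB : (Walk.cons h2 tB).reverse.support = y :: (Walk.cons h2 tB).reverse.support.tail :=
    Walk.support_eq_cons _
  have hLBnodup : (Walk.cons h2 tB).reverse.support.Nodup := by
    rw [Walk.support_reverse]
    exact List.nodup_reverse.mpr pathB.support_nodup
  have hytail : y ∉ (Walk.cons h2 tB).reverse.support.tail := by
    intro hmem
    have := hLB ▸ hLBnodup
    exact (List.nodup_cons.mp this).1 hmem
  have memTail : ∀ v ∈ (Walk.cons h2 tB).reverse.support.tail, v = x ∨ PB v := by
    intro v hv
    have hv' : v ∈ (Walk.cons h2 tB).support := by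
      have := List.mem_of_mem_tail hv
      rwa [Walk.support_reverse, List.mem_reverse] at this
    rcases admB v hv' with rfl | rfl | h
    · exact .inl rfl
    · exact absurd hv hytail
    · exact .inr h
  have memTA : ∀ v ∈ tA.support, v = y ∨ PA v := by
    intro v hv
    rcases admA v (by simp [Walk.support_cons, hv]) with rfl | rfl | h
    · exact absurd hv hxtA
    · exact .inl rfl
    · exact .inr h
  have hrsupp : r.support = tA.support ++ (Walk.cons h2 tB).reverse.support.tail :=
    Walk.support_append _ _
  have hrpath : r.IsPath := by
    rw [Walk.isPath_def, hrsupp]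
    refine List.Nodup.append htApath.support_nodup ?_ ?_
    · exact (hLB ▸ hLBnodup).of_cons
    · intro v hv1 hv2
      rcases memTA v hv1 with rfl | h
      · rcases memTail v hv2 with rfl | h'
        · exact hxy rfl
        · exact hyB h'
      · rcases memTail v hv2 with rfl | h'
        · exact hxA h
        · exact hAB v h h'
  have hxb1 : s(x, a1) ∉ r.edges := by
    rw [hr, Walk.edges_append]
    intro hmem
    rcases List.mem_append.mp hmem with hmem | hmem
    · exact hxtA (Walk.fst_mem_support_of_mem_edges tA hmem)
    · rw [Walk.edges_reverse, List.mem_reverse, Walk.edges_cons] at hmem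
      rcases List.mem_cons.mp hmem with heq | hmem
      · have : a1 = b1 := Sym2.congr_right.mp heq
        exact hAB a1 hPa1 (this ▸ hPb1)
      · exact hxtB (Walk.fst_mem_support_of_mem_edges tB hmem)
  have hcyc : c.IsCycle := (Walk.cons_isCycle_iff r h1).mpr ⟨hrpath, hxb1⟩
  have hclen : 4 ≤ c.length := by
    rw [hc, Walk.length_cons, hr, Walk.length_append, Walk.length_reverse, Walk.length_cons]
    omega
  obtain ⟨u, w, hu, hw, hadj, hne⟩ := hch x c hcyc hclen
  -- support dichotomy
  have supdich : ∀ v ∈ c.support,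
      v ∈ (Walk.cons h1 tA).support ∨ v ∈ (Walk.cons h2 tB).support := by
    intro v hv
    rw [hc, Walk.support_cons, List.mem_cons] at hv
    rcases hv with rfl | hv
    · exact .inl (Walk.start_mem_support _)
    · rw [hrsupp, List.mem_append] at hv
      rcases hv with hv | hv
      · exact .inl (by simp [Walk.support_cons, hv])
      · refine .inr ?_
        have := List.mem_of_mem_tail hv
        rwa [Walk.support_reverse, List.mem_reverse] at this
  have subPA : ∀ e ∈ (Walk.cons h1 tA).edges, e ∈ c.edges := by
    intro e he
    rw [Walk.edges_cons] at he
    rw [hc, Walk.edges_cons, hr, Walk.edges_append]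
    rcases List.mem_cons.mp he with rfl | he
    · exact List.mem_cons_self
    · exact List.mem_cons_of_mem _ (List.mem_append.mpr (.inl he))
  have subPB : ∀ e ∈ (Walk.cons h2 tB).edges, e ∈ c.edges := by
    intro e he
    rw [hc, Walk.edges_cons, hr, Walk.edges_append]
    refine List.mem_cons_of_mem _ (List.mem_append.mpr (.inr ?_))
    rw [Walk.edges_reverse, List.mem_reverse]
    exact he
  have hePA : s(u, w) ∉ (Walk.cons h1 tA).edges := fun h => hne (subPA _ h)
  have hePB : s(u, w) ∉ (Walk.cons h2 tB).edges := fun h => hne (subPB _ h)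
  by_cases cA : u ∈ (Walk.cons h1 tA).support ∧ w ∈ (Walk.cons h1 tA).support
  · exact no_chord _ admA minA cA.1 cA.2 hadj hePA
  by_cases cB : u ∈ (Walk.cons h2 tB).support ∧ w ∈ (Walk.cons h2 tB).support
  · exact no_chord _ admB minB cB.1 cB.2 hadj hePB
  -- cross case
  have hPBof : ∀ v ∈ c.support, v ∉ (Walk.cons h1 tA).support → PB v := by
    intro v hv hvA
    have hv' : v ∈ (Walk.cons h2 tB).support := (supdich v hv).resolve_left hvA
    rcases admB v hv' with rfl | rfl | h
    · exact absurd (Walk.start_mem_support _) hvA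
    · exact absurd (Walk.end_mem_support _) hvA
    · exact h
  have hPAof : ∀ v ∈ c.support, v ∉ (Walk.cons h2 tB).support → PA v := by
    intro v hv hvB
    have hv' : v ∈ (Walk.cons h1 tA).support := (supdich v hv).resolve_right hvB
    rcases admA v hv' with rfl | rfl | h
    · exact absurd (Walk.start_mem_support _) hvB
    · exact absurd (Walk.end_mem_support _) hvB
    · exact h
  rcases not_and_or.mp cA with hun | hwn
  · have hPBu : PB u := hPBof u hu hun
    have huB : u ∈ (Walk.cons h2 tB).support := (supdich u hu).resolve_left hun
    have hwnB : w ∉ (Walk.cons h2 tB).support := fun h => cB ⟨huB, h⟩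
    have hPAw : PA w := hPAof w hw hwnB
    exact hcross w u hPAw hPBu hadj.symm
  · have hPBw : PB w := hPBof w hw hwn
    have hwB : w ∈ (Walk.cons h2 tB).support := (supdich w hw).resolve_left hwn
    have hunB : u ∉ (Walk.cons h2 tB).support := fun h => cB ⟨h, hwB⟩
    have hPAu : PA u := hPAof u hu hunB
    exact hcross u w hPAu hPBw hadj

variable [DecidableEq V]


/-- `u` is simplicial within `S`: its neighbors in `S` are pairwise adjacent. -/
def SimpIn (H : SimpleGraph V) (S : Finset V) (u : V) : Prop :=
  ∀ a b : V, a ∈ S → b ∈ S → H.Adj u a → H.Adj u b → a ≠ b → H.Adj a b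

theorem dirac (hch : H.IsChordal) (S : Finset V) :
    (∀ a ∈ S, ∀ b ∈ S, a ≠ b → H.Adj a b) ∨
    ∃ u ∈ S, ∃ w ∈ S, u ≠ w ∧ ¬H.Adj u w ∧ SimpIn H S u ∧ SimpIn H S w := by
  classical
  induction S using Finset.strongInduction with
  | _ S IH =>
  by_cases hcl : ∀ a ∈ S, ∀ b ∈ S, a ≠ b → H.Adj a b
  · exact .inl hcl
  right
  push_neg at hcl
  obtain ⟨a, ha, b, hb, hab, hnadj⟩ := hcl
  set Sep : Finset V → Prop := fun T => T ⊆ S ∧ a ∉ T ∧ b ∉ T ∧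
    ∀ p : H.Walk a b, ¬ (∀ v ∈ p.support, v ∈ S ∧ v ∉ T) with hSepdef
  have hSep0 : Sep ((S.erase a).erase b) := by
    refine ⟨(Finset.erase_subset _ _).trans (Finset.erase_subset _ _), ?_, ?_, ?_⟩
    · simp [Finset.mem_erase]
    · simp [Finset.mem_erase]
    · intro p hp
      cases p with
      | nil => exact hab rfl
      | cons h q =>
        rename_i z
        have hz := hp z (by simp [Walk.support_cons, Walk.start_mem_support])
        have : z = b ∨ z = a := by
          by_contra hcon
          push_neg at hcon
          exact hz.2 (by simp [Finset.mem_erase, hcon.1, hcon.2, hz.1])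
        rcases this with rfl | rfl
        · exact hnadj h
        · exact h.ne rfl
  have h𝒯 : ((S.powerset).filter Sep).Nonempty :=
    ⟨_, Finset.mem_filter.mpr ⟨Finset.mem_powerset.mpr hSep0.1, hSep0⟩⟩
  obtain ⟨T, hTmem, hTmin⟩ := Finset.exists_min_image _ Finset.card h𝒯
  have hT : Sep T := (Finset.mem_filter.mp hTmem).2
  set D : V → Prop := fun v => v ∈ S ∧ v ∉ T with hDdef
  set RA : V → Prop := fun v => ∃ p : H.Walk a v, ∀ w ∈ p.support, D w with hRAdef
  set RB : V → Prop := fun v => ∃ p : H.Walk b v, ∀ w ∈ p.support, D w with hRBdef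
  have hDa : D a := ⟨ha, hT.2.1⟩
  have hDb : D b := ⟨hb, hT.2.2.1⟩
  have hRa : RA a := ⟨Walk.nil, by
    intro w hw; rw [Walk.mem_support_nil_iff] at hw; subst hw; exact hDa⟩
  have hRb : RB b := ⟨Walk.nil, by
    intro w hw; rw [Walk.mem_support_nil_iff] at hw; subst hw; exact hDb⟩
  have hcloseA : ∀ u v, RA u → H.Adj u v → D v → RA v := by
    rintro u v ⟨p, hp⟩ huv hDv
    refine ⟨p.append (Walk.cons huv Walk.nil), ?_⟩
    intro w hw
    rw [Walk.mem_support_append_iff] at hw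
    rcases hw with hw | hw
    · exact hp w hw
    · simp only [Walk.support_cons, Walk.support_nil, List.mem_cons,
        List.mem_singleton] at hw
      rcases hw with rfl | rfl | hF
      · exact hp _ (Walk.end_mem_support _)
      · exact hDv
      · exact absurd hF List.not_mem_nil
  have hcloseB : ∀ u v, RB u → H.Adj u v → D v → RB v := by
    rintro u v ⟨p, hp⟩ huv hDv
    refine ⟨p.append (Walk.cons huv Walk.nil), ?_⟩
    intro w hw
    rw [Walk.mem_support_append_iff] at hw
    rcases hw with hw | hw
    · exact hp w hw
    · simp only [Walk.support_cons, Walk.support_nil, List.mem_cons,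
        List.mem_singleton] at hw
      rcases hw with rfl | rfl | hF
      · exact hp _ (Walk.end_mem_support _)
      · exact hDv
      · exact absurd hF List.not_mem_nil
  have hmemA : ∀ v, RA v → D v := by rintro v ⟨p, hp⟩; exact hp v (Walk.end_mem_support p)
  have hmemB : ∀ v, RB v → D v := by rintro v ⟨p, hp⟩; exact hp v (Walk.end_mem_support p)
  have hAB : ∀ v, RA v → RB v → False := by
    rintro v ⟨p, hp⟩ ⟨q, hq⟩
    refine hT.2.2.2 (p.append q.reverse) ?_
    intro w hw
    rw [Walk.mem_support_append_iff] at hw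
    rcases hw with hw | hw
    · exact hp w hw
    · rw [Walk.support_reverse, List.mem_reverse] at hw
      exact hq w hw
  have hattach : ∀ x ∈ T, (∃ v, RA v ∧ H.Adj x v) ∧ (∃ v, RB v ∧ H.Adj x v) := by
    intro x hx
    have hTx : ¬ Sep (T.erase x) := by
      intro hsep
      have h1 : T.card ≤ (T.erase x).card :=
        hTmin _ (Finset.mem_filter.mpr ⟨Finset.mem_powerset.mpr hsep.1, hsep⟩)
      have h2 := Finset.card_erase_lt_of_mem hx
      omega
    have hsub : T.erase x ⊆ S := (Finset.erase_subset _ _).trans hT.1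
    have hanot : a ∉ T.erase x := fun h => hT.2.1 (Finset.mem_of_mem_erase h)
    have hbnot : b ∉ T.erase x := fun h => hT.2.2.1 (Finset.mem_of_mem_erase h)
    have hex : ∃ p : H.Walk a b, ∀ v ∈ p.support, v ∈ S ∧ v ∉ T.erase x := by
      by_contra hcon
      push_neg at hcon
      refine hTx ⟨hsub, hanot, hbnot, fun p hp => ?_⟩
      obtain ⟨v, hv, hv2⟩ := hcon p
      exact (hp v hv).2 (hv2 (hp v hv).1)
    obtain ⟨p, hp⟩ := hex
    have hxp : x ∈ p.support := by
      by_contra hxp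
      refine hT.2.2.2 p ?_
      intro v hv
      refine ⟨(hp v hv).1, fun hvT => ?_⟩
      exact (hp v hv).2 (Finset.mem_erase.mpr ⟨fun h => hxp (h ▸ hv), hvT⟩)
    have hadm : ∀ v ∈ p.support, v = x ∨ D v := by
      intro v hv
      by_cases hvx : v = x
      · exact .inl hvx
      · exact .inr ⟨(hp v hv).1, fun hvT => (hp v hv).2 (Finset.mem_erase.mpr ⟨hvx, hvT⟩)⟩
    have hxD : ¬ D x := fun hD => hD.2 hx
    refine ⟨first_hit hcloseA hxD p hadm hRa hDa hxp, ?_⟩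
    refine first_hit hcloseB hxD p.reverse ?_ hRb hDb ?_
    · intro v hv
      rw [Walk.support_reverse, List.mem_reverse] at hv
      exact hadm v hv
    · rwa [Walk.support_reverse, List.mem_reverse]
  have hTclique : ∀ x ∈ T, ∀ y ∈ T, x ≠ y → H.Adj x y := by
    intro x hx y hy hxy
    by_contra hnxy
    obtain ⟨⟨vax, hvax, haxadj⟩, ⟨vbx, hvbx, hbxadj⟩⟩ := hattach x hx
    obtain ⟨⟨vay, hvay, hayadj⟩, ⟨vby, hvby, hbyadj⟩⟩ := hattach y hy
    refine clique_sep hch hxy hnxy (PA := RA) (PB := RB) hAB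
      (fun h => (hmemA x h).2 hx) (fun h => (hmemA y h).2 hy)
      (fun h => (hmemB x h).2 hx) (fun h => (hmemB y h).2 hy)
      (fun u v hu hv hadj => hAB v (hcloseA u v hu hadj (hmemB v hv)) hv) ?_ ?_
    · obtain ⟨p1, hp1⟩ := hvax
      obtain ⟨p2, hp2⟩ := hvay
      refine ⟨Walk.cons haxadj ((p1.reverse.append p2).append
        (Walk.cons hayadj.symm Walk.nil)), ?_⟩
      intro v hv
      rw [Walk.support_cons, List.mem_cons] at hv
      rcases hv with rfl | hv
      · exact .inl rfl
      rw [Walk.mem_support_append_iff] at hv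
      rcases hv with hv | hv
      · rw [Walk.mem_support_append_iff] at hv
        refine .inr (.inr ?_)
        rcases hv with hv | hv
        · rw [Walk.support_reverse, List.mem_reverse] at hv
          exact walk_all hcloseA p1 hp1 hRa v hv
        · exact walk_all hcloseA p2 hp2 hRa v hv
      · simp only [Walk.support_cons, Walk.support_nil, List.mem_cons,
          List.mem_singleton] at hv
        rcases hv with rfl | rfl | hF
        · exact .inr (.inr ⟨p2, hp2⟩)
        · exact .inr (.inl rfl)
        · exact absurd hF List.not_mem_nil
    · obtain ⟨p1, hp1⟩ := hvbx
      obtain ⟨p2, hp2⟩ := hvby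
      refine ⟨Walk.cons hbxadj ((p1.reverse.append p2).append
        (Walk.cons hbyadj.symm Walk.nil)), ?_⟩
      intro v hv
      rw [Walk.support_cons, List.mem_cons] at hv
      rcases hv with rfl | hv
      · exact .inl rfl
      rw [Walk.mem_support_append_iff] at hv
      rcases hv with hv | hv
      · rw [Walk.mem_support_append_iff] at hv
        refine .inr (.inr ?_)
        rcases hv with hv | hv
        · rw [Walk.support_reverse, List.mem_reverse] at hv
          exact walk_all hcloseB p1 hp1 hRb v hv
        · exact walk_all hcloseB p2 hp2 hRb v hv
      · simp only [Walk.support_cons, Walk.support_nil, List.mem_cons,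
          List.mem_singleton] at hv
        rcases hv with rfl | rfl | hF
        · exact .inr (.inr ⟨p2, hp2⟩)
        · exact .inr (.inl rfl)
        · exact absurd hF List.not_mem_nil
  have side : ∀ (R : V → Prop), (∀ u v, R u → H.Adj u v → D v → R v) → (∀ v, R v → D v) →
      ∀ c, R c → ∀ z, z ∈ S → ¬ R z → z ∉ T → ∃ u₁, R u₁ ∧ SimpIn H S u₁ := by
    intro R hclose hmem c hc z hzS hzR hzT
    set S₁ : Finset V := S.filter (fun v => R v ∨ v ∈ T) with hS₁
    have hsub : S₁ ⊆ S := Finset.filter_subset _ _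
    have hzn : z ∉ S₁ := by
      intro hmem1
      rcases (Finset.mem_filter.mp hmem1).2 with h | h
      · exact hzR h
      · exact hzT h
    have hss : S₁ ⊂ S := (Finset.ssubset_iff_of_subset hsub).mpr ⟨z, hzS, hzn⟩
    have hnbr : ∀ u v, R u → v ∈ S → H.Adj u v → v ∈ S₁ := by
      intro u v hu hvS hadj
      by_cases hvT : v ∈ T
      · exact Finset.mem_filter.mpr ⟨hvS, .inr hvT⟩
      · exact Finset.mem_filter.mpr ⟨hvS, .inl (hclose u v hu hadj ⟨hvS, hvT⟩)⟩
    have lift : ∀ u, R u → SimpIn H S₁ u → SimpIn H S u := by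
      intro u hu hsimp a1 b1 ha1 hb1 hadj1 hadj2 hne
      exact hsimp a1 b1 (hnbr u a1 hu ha1 hadj1) (hnbr u b1 hu hb1 hadj2) hadj1 hadj2 hne
    rcases IH S₁ hss with hclique | ⟨u, hu, w, hw, hne, hnadj2, su, sw⟩
    · refine ⟨c, hc, lift c hc ?_⟩
      intro a1 b1 ha1 hb1 _ _ hne
      exact hclique a1 ha1 b1 hb1 hne
    · have hpick : ∃ u₁, R u₁ ∧ SimpIn H S₁ u₁ := by
        rcases (Finset.mem_filter.mp hu).2 with hRu | hTu
        · exact ⟨u, hRu, su⟩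
        · rcases (Finset.mem_filter.mp hw).2 with hRw | hTw
          · exact ⟨w, hRw, sw⟩
          · exact absurd (hTclique u hTu w hTw hne) hnadj2
      obtain ⟨u₁, hRu₁, hsim⟩ := hpick
      exact ⟨u₁, hRu₁, lift u₁ hRu₁ hsim⟩
  obtain ⟨u₁, hRu₁, hsim₁⟩ :=
    side RA hcloseA hmemA a hRa b hb (fun h => hAB b h hRb) hT.2.2.1
  obtain ⟨u₂, hRu₂, hsim₂⟩ :=
    side RB hcloseB hmemB b hRb a ha (fun h => hAB a hRa h) hT.2.1
  refine ⟨u₁, (hmemA _ hRu₁).1, u₂, (hmemB _ hRu₂).1, ?_, ?_, hsim₁, hsim₂⟩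
  · intro h; exact hAB u₁ hRu₁ (h ▸ hRu₂)
  · intro hadj; exact hAB u₂ (hcloseA u₁ u₂ hRu₁ hadj (hmemB _ hRu₂)) hRu₂


lemma exists_simpIn (hch : H.IsChordal) {S : Finset V} (hne : S.Nonempty) :
    ∃ u ∈ S, SimpIn H S u := by
  rcases dirac hch S with hcl | ⟨u, hu, _, _, _, _, hs, _⟩
  · obtain ⟨u, hu⟩ := hne
    exact ⟨u, hu, fun a b ha hb _ _ hne' => hcl a ha b hb hne'⟩
  · exact ⟨u, hu, hs⟩

lemma reroute {S : Finset V} {u : V} (hsimp : SimpIn H S u) :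
    ∀ (n : ℕ) {z y : V} (p : H.Walk z y), p.length ≤ n → (∀ v ∈ p.support, v ∈ S) →
      z ≠ u → y ≠ u → ∃ q : H.Walk z y, ∀ v ∈ q.support, v ∈ S.erase u := by
  intro n
  induction n with
  | zero =>
    intro z y p hlen hadm hz hy
    cases p with
    | nil =>
      refine ⟨Walk.nil, ?_⟩
      intro v hv
      rw [Walk.mem_support_nil_iff] at hv; subst hv
      exact Finset.mem_erase.mpr ⟨hz, hadm _ (Walk.start_mem_support _)⟩
    | cons h q => simp [Walk.length_cons] at hlen
  | succ n ih =>
    intro z y p hlen hadm hz hy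
    cases p with
    | nil =>
      refine ⟨Walk.nil, ?_⟩
      intro v hv
      rw [Walk.mem_support_nil_iff] at hv; subst hv
      exact Finset.mem_erase.mpr ⟨hz, hadm _ (Walk.start_mem_support _)⟩
    | cons h q =>
      rename_i t
      rw [Walk.length_cons] at hlen
      by_cases ht : t = u
      · subst ht
        cases q with
        | nil => exact absurd rfl hy
        | cons h2 q2 =>
          rename_i t2
          rw [Walk.length_cons] at hlen
          have ht2 := h2.ne'
          have hadm2 : ∀ v ∈ q2.support, v ∈ S := by
            intro v hv
            refine hadm v ?_
            rw [Walk.support_cons]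
            refine List.mem_cons_of_mem _ ?_
            rw [Walk.support_cons]
            exact List.mem_cons_of_mem _ hv
          by_cases hzt : z = t2
          · subst hzt
            exact ih q2 (by omega) hadm2 hz hy
          · have hadj : H.Adj z t2 := by
              refine hsimp z t2 (hadm z (Walk.start_mem_support _)) ?_ h.symm h2 hzt
              exact hadm2 t2 (Walk.start_mem_support _)
            obtain ⟨q', hq'⟩ := ih q2 (by omega) hadm2 ht2 hy
            refine ⟨Walk.cons hadj q', ?_⟩
            intro v hv
            rw [Walk.support_cons, List.mem_cons] at hv
            rcases hv with rfl | hv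
            · exact Finset.mem_erase.mpr ⟨hz, hadm _ (Walk.start_mem_support _)⟩
            · exact hq' v hv
      · have hadm1 : ∀ v ∈ q.support, v ∈ S := by
          intro v hv
          refine hadm v ?_
          rw [Walk.support_cons]
          exact List.mem_cons_of_mem _ hv
        obtain ⟨q', hq'⟩ := ih q (by omega) hadm1 ht hy
        refine ⟨Walk.cons h q', ?_⟩
        intro v hv
        rw [Walk.support_cons, List.mem_cons] at hv
        rcases hv with rfl | hv
        · exact Finset.mem_erase.mpr ⟨hz, hadm _ (Walk.start_mem_support _)⟩
        · exact hq' v hv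

end LCD

namespace LGraph

lemma reachIn_walk {V : Type*} (G : LGraph V) :
    ∀ (n : ℕ) (x y : V), G.ReachIn n x y → Nonempty (G.loopless.Walk x y)
  | 0, x, y, h => by
      rw [show x = y from h]; exact ⟨SimpleGraph.Walk.nil⟩
  | n + 1, x, y, h => by
      obtain ⟨z, hadj, hr⟩ := h
      obtain ⟨w⟩ := reachIn_walk G n z y hr
      by_cases hxz : x = z
      · subst hxz; exact ⟨w⟩
      · exact ⟨SimpleGraph.Walk.cons ⟨hxz, hadj⟩ w⟩

theorem dism_main {V : Type*} [DecidableEq V] (G : LGraph V) (hloop : ∀ v, G.Adj v v)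
    (hch : G.loopless.IsChordal) (S : Finset V) (hne : S.Nonempty)
    (hconn : ∀ x ∈ S, ∀ y ∈ S, ∃ p : G.loopless.Walk x y, ∀ v ∈ p.support, v ∈ S) :
    G.DismOnLooped S := by
  classical
  revert hne hconn
  induction S using Finset.strongInduction with
  | _ S IH =>
  intro hne hconn
  by_cases hcard : S.card ≤ 1
  · obtain ⟨v, rfl⟩ := Finset.card_eq_one.mp (le_antisymm hcard (Finset.card_pos.mpr hne))
    exact DismOnLooped.single v (hloop v)
  · push_neg at hcard
    obtain ⟨u, huS, hsimp⟩ := LCD.exists_simpIn hch hne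
    obtain ⟨y, hyS, hyu⟩ := Finset.exists_mem_ne hcard u
    obtain ⟨p, hp⟩ := hconn u huS y hyS
    cases p with
    | nil => exact absurd rfl hyu
    | cons h q =>
      rename_i v
      have hvS : v ∈ S := by
        refine hp v ?_
        rw [SimpleGraph.Walk.support_cons]
        exact List.mem_cons_of_mem _ (SimpleGraph.Walk.start_mem_support _)
      have hvu : v ≠ u := h.ne'
      refine DismOnLooped.fold S u v huS hvS (fun e => hvu e.symm) ?_ ?_
      · intro w hwS hadj
        by_cases hwu : w = u
        · subst hwu; exact G.symm h.2
        · by_cases hwv : w = v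
          · rw [hwv]; exact hloop v
          · exact (hsimp v w hvS hwS h ⟨fun e => hwu e.symm, hadj⟩
              (fun e => hwv e.symm)).2
      · refine IH (S.erase u) (Finset.erase_ssubset huS)
          ⟨v, Finset.mem_erase.mpr ⟨hvu, hvS⟩⟩ ?_
        intro x hx y' hy'
        obtain ⟨hxu, hxS⟩ := Finset.mem_erase.mp hx
        obtain ⟨hy'u, hy'S⟩ := Finset.mem_erase.mp hy'
        obtain ⟨p, hp⟩ := hconn x hxS y' hy'S
        exact LCD.reroute hsimp p.length p le_rfl hp hxu hy'u

end LGraph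

/-- Every connected loop-chordal graph is dismantlable: a sequence of folds
reduces it to a single looped vertex. -/
theorem loopChordal_connected_dismantlable {V : Type} [Fintype V] [DecidableEq V] [Nonempty V]
    (G : LGraph V) (hconn : ∀ x y : V, ∃ n : ℕ, G.ReachIn n x y)
    (hlc : G.LoopChordal) :
    G.DismOnLooped Finset.univ := by
  classical
  refine LGraph.dism_main G hlc.1 hlc.2 Finset.univ Finset.univ_nonempty ?_
  intro x _ y _
  obtain ⟨n, hr⟩ := hconn x y
  obtain ⟨p⟩ := LGraph.reachIn_walk G n x y hr
  exact ⟨p, fun v _ => Finset.mem_univ v⟩
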